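/- Let T : [0,1] → [0,1] be the tent map T(x) = 2x for x < 1/2 and T(x) = 2(1-x) for x ≥ 1/2. If s = s_1 s_2 s_3 ... ∈ {0,1}^ℕ and τ(s) = ∑_{k≥1} t_k 2^{-k} with t_k = (s_1 + ... + s_k) mod 2, then τ(σ(s)) = T(τ(s)), where σ is the left shift. -/

import Mathlib

theorem stmt_17 (s : ℕ → ℕ) (hs : ∀ i, s i ≤ 1)
    (t : (ℕ → ℕ) → ℕ → ℕ)
    (ht : ∀ s' k, t s' k = (∑ i ∈ Finset.range k, s' i) % 2)
    (τ : (ℕ → ℕ) → ℝ)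
    (hτ : ∀ s', τ s' = ∑' k : ℕ, (t s' (k + 1) : ℝ) / 2 ^ (k + 1))
    (T : ℝ → ℝ) (hT : ∀ x, T x = if x < 1 / 2 then 2 * x else 2 * (1 - x)) :
    τ (fun n => s (n + 1)) = T (τ s) := by
  have htle : ∀ s' k, t s' k ≤ 1 := by
    intro s' k; rw [ht]; omega
  have geo : Summable (fun k : ℕ => (1/2:ℝ)^(k+1)) :=
    summable_geometric_two.comp_injective Nat.succ_injective
  have geosum : ∑' k : ℕ, (1/2:ℝ)^(k+1) = 1 := by
    simp_rw [pow_succ']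
    rw [tsum_mul_left, tsum_geometric_two]
    norm_num
  have key : ∀ a : ℕ → ℕ, (∀ k, a k ≤ 1) →
      Summable (fun k : ℕ => (a k : ℝ)/2^(k+1)) ∧
      0 ≤ ∑' k : ℕ, (a k : ℝ)/2^(k+1) ∧ (∑' k : ℕ, (a k : ℝ)/2^(k+1)) ≤ 1 := by
    intro a ha
    have hle : ∀ k : ℕ, (a k : ℝ)/2^(k+1) ≤ (1/2:ℝ)^(k+1) := by
      intro k
      rw [div_pow, one_pow]
      gcongr
      exact_mod_cast ha k
    have hpos : ∀ k : ℕ, (0:ℝ) ≤ (a k : ℝ)/2^(k+1) := fun k => by positivity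
    have hsum : Summable (fun k : ℕ => (a k : ℝ)/2^(k+1)) :=
      Summable.of_nonneg_of_le hpos hle geo
    refine ⟨hsum, tsum_nonneg hpos, ?_⟩
    calc (∑' k : ℕ, (a k : ℝ)/2^(k+1)) ≤ ∑' k : ℕ, (1/2:ℝ)^(k+1) :=
          Summable.tsum_le_tsum hle hsum geo
      _ = 1 := geosum
  obtain ⟨sumτ, _, _⟩ := key (fun k => t s (k+1)) (fun k => htle s (k+1))
  obtain ⟨sumB, Bnn, Ble⟩ := key (fun k => t s (k+2)) (fun k => htle s (k+2))
  set B : ℝ := ∑' k : ℕ, (t s (k+2) : ℝ)/2^(k+1) with hB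
  -- split off the first term of τ s
  have hτs : τ s = (t s 1 : ℝ)/2 + (1/2) * B := by
    rw [hτ, Summable.tsum_eq_zero_add sumτ]
    congr 1
    · norm_num
    · rw [hB, ← tsum_mul_left]
      congr 1
      ext k
      ring
  -- value of t s 1
  have ht1 : t s 1 = s 0 % 2 := by
    rw [ht]; simp
  rcases Nat.le_one_iff_eq_zero_or_eq_one.mp (hs 0) with h0 | h0
  · -- s 0 = 0 case
    have trel : ∀ k : ℕ, t (fun n => s (n+1)) (k+1) = t s (k+2) := by
      intro k
      rw [ht, ht, Finset.sum_range_succ' s (k+1), h0, add_zero]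
    have hτσ : τ (fun n => s (n + 1)) = B := by
      rw [hτ, hB]
      congr 1
      ext k
      rw [trel]
    have ht10 : (t s 1 : ℝ) = 0 := by rw [ht1, h0]; norm_num
    rw [hτσ, hT, hτs, ht10]
    split_ifs with h
    · ring
    · have : B = 1 := by linarith
      linarith
  · -- s 0 = 1 case
    have trel : ∀ k : ℕ, (t (fun n => s (n+1)) (k+1) : ℝ) = 1 - (t s (k+2) : ℝ) := by
      intro k
      have e1 : t (fun n => s (n+1)) (k+1) = (∑ i ∈ Finset.range (k+1), s (i+1)) % 2 := ht _ _
      have e2 : t s (k+2) = ((∑ i ∈ Finset.range (k+1), s (i+1)) + 1) % 2 := by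
        rw [ht, Finset.sum_range_succ' s (k+1), h0]
      have : t (fun n => s (n+1)) (k+1) + t s (k+2) = 1 := by omega
      have := congrArg (fun n : ℕ => (n : ℝ)) this
      push_cast at this
      linarith
    have hτσ : τ (fun n => s (n + 1)) = 1 - B := by
      rw [hτ]
      have : (fun k : ℕ => (t (fun n => s (n+1)) (k+1) : ℝ)/2^(k+1))
          = fun k : ℕ => (1/2:ℝ)^(k+1) - (t s (k+2) : ℝ)/2^(k+1) := by
        ext k
        rw [trel, div_pow, one_pow]
        ring
      rw [this, Summable.tsum_sub geo sumB, geosum, hB]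
    have ht11 : (t s 1 : ℝ) = 1 := by rw [ht1, h0]; norm_num
    rw [hτσ, hT, hτs, ht11]
    have : ¬ ((1:ℝ)/2 + 1/2 * B < 1/2) := by push_neg; linarith
    rw [if_neg this]
    ring
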